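/- arXiv:2409.12382 — 2 statements merged into one kernel-verified Lean document; each statement's English description precedes it below -/
import Mathlib

section
/- Let h : ℝ → ℝ be differentiable and satisfy h'(t) ≥ −α(h(t)) for all t ≥ 0, where α is locally Lipschitz, strictly increasing, and α(0) = 0. If h(0) ≥ 0 then h(t) ≥ 0 for all t ≥ 0. -/
theorem barrier_comparison (h : ℝ → ℝ) (α : ℝ → ℝ)
    (hdiff : Differentiable ℝ h)
    (hαlip : LocallyLipschitz α) (hαmono : StrictMono α) (hα0 : α 0 = 0)
    (hineq : ∀ t : ℝ, 0 ≤ t → deriv h t ≥ -α (h t))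
    (h0 : 0 ≤ h 0) :
    ∀ t : ℝ, 0 ≤ t → 0 ≤ h t := by
  intro t₁ ht₁
  by_contra hneg
  push_neg at hneg
  -- the set of times in [0, t₁] where h is nonnegative
  set S : Set ℝ := Set.Icc (0:ℝ) t₁ ∩ {t | 0 ≤ h t} with hS
  have hSne : S.Nonempty := ⟨0, ⟨le_refl 0, ht₁⟩, h0⟩
  have hScomp : IsCompact S :=
    isCompact_Icc.inter_right (isClosed_le continuous_const hdiff.continuous)
  set s := sSup S with hs
  have hsmem : s ∈ S := hScomp.sSup_mem hSne
  obtain ⟨⟨hs0, hst₁⟩, hhs⟩ := hsmem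
  have hhs' : 0 ≤ h s := hhs
  have hslt : s < t₁ := lt_of_le_of_ne hst₁ (by
    intro heq
    rw [heq] at hhs'
    linarith)
  -- on (s, t₁], h < 0
  have hlt : ∀ u ∈ Set.Ioo s t₁, h u < 0 := by
    intro u ⟨hu1, hu2⟩
    by_contra hc
    push_neg at hc
    have : u ∈ S := ⟨⟨le_trans hs0 hu1.le, hu2.le⟩, hc⟩
    exact absurd (le_csSup hScomp.bddAbove this) (not_le.mpr hu1)
  -- h is monotone on [s, t₁] since deriv h > 0 there
  have hmono : MonotoneOn h (Set.Icc s t₁) := by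
    apply monotoneOn_of_deriv_nonneg (convex_Icc s t₁) hdiff.continuous.continuousOn
      (fun u hu => (hdiff u).differentiableWithinAt)
    intro u hu
    rw [interior_Icc] at hu
    have hu0 : (0:ℝ) ≤ u := le_trans hs0 hu.1.le
    have : α (h u) < 0 := by
      rw [← hα0]
      exact hαmono (hlt u hu)
    linarith [hineq u hu0]
  have := hmono ⟨le_refl s, hst₁⟩ ⟨hslt.le, le_refl t₁⟩ hslt.le
  linarith
end

section
/- Suppose h : ℝ^d → ℝ is continuously differentiable, α : ℝ → ℝ is locally Lipschitz with α(0) = 0 and strictly increasing, and x : [0, T] → ℝ^d is a C¹ trajectory satisfying ⟨∇h(x(t)), x'(t)⟩ ≥ −α(h(x(t))) for all t ∈ [0, T]. If h(x(0)) ≥ 0, then h(x(t)) ≥ 0 for all t ∈ [0, T]. -/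
theorem cbf_forward_invariance_along_trajectory (d : ℕ) (T : ℝ) (hT : 0 < T)
    (h : EuclideanSpace ℝ (Fin d) → ℝ) (hh : ContDiff ℝ 1 h)
    (α : ℝ → ℝ) (hαlip : LocallyLipschitz α) (hαmono : StrictMono α) (hα0 : α 0 = 0)
    (x : ℝ → EuclideanSpace ℝ (Fin d)) (x' : ℝ → EuclideanSpace ℝ (Fin d))
    (hx : ∀ t ∈ Set.Icc 0 T, HasDerivAt x (x' t) t)
    (hx' : Continuous x')
    (hbarrier : ∀ t ∈ Set.Icc 0 T,
      inner ℝ (gradient h (x t)) (x' t) ≥ -α (h (x t)))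
    (h0 : 0 ≤ h (x 0)) :
    ∀ t ∈ Set.Icc 0 T, 0 ≤ h (x t) := by
  intro t₁ ht₁
  by_contra hneg
  push_neg at hneg
  set y : ℝ → ℝ := fun t => h (x t) with hy
  have hgrad : ∀ t ∈ Set.Icc 0 T,
      HasDerivAt y (inner ℝ (gradient h (x t)) (x' t)) t := by
    intro t ht
    have hd : HasGradientAt h (gradient h (x t)) (x t) :=
      ((hh.differentiable one_ne_zero) (x t)).hasGradientAt
    have := hd.hasFDerivAt.comp_hasDerivAt t (hx t ht)
    simpa [InnerProductSpace.toDual_apply_apply, hy, Function.comp_def] using this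
  have hycont : ContinuousOn y (Set.Icc 0 T) := fun t ht =>
    (hgrad t ht).continuousAt.continuousWithinAt
  set S := {t ∈ Set.Icc 0 t₁ | 0 ≤ y t} with hS
  have h0S : (0:ℝ) ∈ S := ⟨⟨le_refl 0, ht₁.1⟩, h0⟩
  have hSne : S.Nonempty := ⟨0, h0S⟩
  have hSbdd : BddAbove S := ⟨t₁, fun t ht => ht.1.2⟩
  have hSclosed : IsClosed S := by
    have hEq : S = Set.Icc 0 t₁ ∩ y ⁻¹' Set.Ici 0 := by
      ext t; simp [hS, Set.mem_sep_iff, and_comm]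
    rw [hEq]
    exact ContinuousOn.preimage_isClosed_of_isClosed
      (hycont.mono (Set.Icc_subset_Icc le_rfl ht₁.2)) isClosed_Icc isClosed_Ici
  set t₀ := sSup S with ht₀def
  have ht₀S : t₀ ∈ S := hSclosed.csSup_mem hSne hSbdd
  have ht₀1 : t₀ ≤ t₁ := ht₀S.1.2
  have hyt₀ : 0 ≤ y t₀ := ht₀S.2
  have ht₀lt : t₀ < t₁ := lt_of_le_of_ne ht₀1 (fun hEq => by rw [hEq] at hyt₀; linarith)
  have hsub : Set.Icc t₀ t₁ ⊆ Set.Icc 0 T := Set.Icc_subset_Icc ht₀S.1.1 ht₁.2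
  have hnegOn : ∀ s ∈ Set.Ioc t₀ t₁, y s ≤ 0 := by
    intro s hs
    by_contra hpos
    push_neg at hpos
    have : s ∈ S := ⟨⟨le_trans ht₀S.1.1 hs.1.le, hs.2⟩, hpos.le⟩
    exact absurd (le_csSup hSbdd this) (not_le.mpr hs.1)
  have hmono : MonotoneOn y (Set.Icc t₀ t₁) := by
    apply monotoneOn_of_deriv_nonneg (convex_Icc _ _) (hycont.mono hsub)
    · intro s hs
      rw [interior_Icc] at hs
      exact ((hgrad s (hsub ⟨hs.1.le, hs.2.le⟩)).differentiableAt).differentiableWithinAt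
    · intro s hs
      rw [interior_Icc] at hs
      have hsT : s ∈ Set.Icc 0 T := hsub ⟨hs.1.le, hs.2.le⟩
      rw [(hgrad s hsT).deriv]
      have h1 := hbarrier s hsT
      have h2 : α (y s) ≤ 0 := by
        have := hαmono.monotone (hnegOn s ⟨hs.1, hs.2.le⟩)
        simpa [hα0] using this
      have : -α (y s) ≥ -(0:ℝ) := by linarith
      calc (0:ℝ) ≤ -α (y s) := by linarith
        _ ≤ inner ℝ (gradient h (x s)) (x' s) := h1
  have := hmono (Set.left_mem_Icc.mpr ht₀lt.le) (Set.right_mem_Icc.mpr ht₀lt.le) ht₀lt.le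
  simp only [hy] at this hyt₀
  linarith
end
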